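/- Let c = (c_1,…,c_k) be a composition of size n with partial sums β_j = c_1+⋯+c_j, and write the reduced composition polynomial as f_c(q) = Σ_{i=0}^{n−k} f_i q^i. Then for each 0 ≤ i ≤ n−k, f_i = Σ_{j : β_j ≤ i} (1/∏_{l≠j}(β_l − β_j)) · C(k + i − β_j − 1, i − β_j), where C(a,b) denotes the binomial coefficient (so C(k+m−1, m) is the number of multisets of size m from a set of k elements). -/

import Mathlib

open MeasureTheory

/-- Iterated integral defining the composition polynomial, peeling off the
outermost variable first (so the list argument is the reversed composition). -/
noncomputable def gAux : List ℕ → ℝ → ℝ → ℝ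
  | [], _, _ => 1
  | a :: rest, q, u => ∫ t in q..u, t ^ (a - 1) * gAux rest q t

/-- The composition polynomial
`g_c(q) = ∫_q^1 ∫_q^{t_k} ⋯ ∫_q^{t_2} t_1^{c_1-1} ⋯ t_k^{c_k-1} dt_1 ⋯ dt_k`. -/
noncomputable def gcomp (c : List ℕ) (q : ℝ) : ℝ := gAux c.reverse q 1

/-- Partial sums `β_j = c_1 + ⋯ + c_j`. -/
def beta (c : List ℕ) (j : ℕ) : ℕ := (c.take j).sum

/-- Theorem: the coefficients `f_i` of the reduced composition polynomial
`f_c(q) = Σ_{i=0}^{n−k} f_i q^i` (where `g_c(q) = (1−q)^k f_c(q)`) are given by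
`f_i = Σ_{j : β_j ≤ i} (1/∏_{l≠j}(β_l − β_j)) · C(k + (i − β_j) − 1, i − β_j)`. -/
lemma beta_length (c : List ℕ) : beta c c.length = c.sum := by simp [beta]

lemma beta_le_sum (c : List ℕ) (j : ℕ) : beta c j ≤ c.sum := by
  unfold beta
  conv_rhs => rw [← List.take_append_drop j c]
  rw [List.sum_append]; omega

lemma beta_strictMonoOn (c : List ℕ) (hpos : ∀ a ∈ c, 0 < a) {j1 j2 : ℕ}
    (h : j1 < j2) (h2 : j2 ≤ c.length) : beta c j1 < beta c j2 := by
  unfold beta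
  have hsplit : c.take j2 = c.take j1 ++ (c.drop j1).take (j2 - j1) := by
    rw [← List.take_add]; congr 1; omega
  rw [hsplit, List.sum_append]
  have hnonempty : (c.drop j1).take (j2 - j1) ≠ [] := by
    rw [← List.length_pos_iff_ne_nil, List.length_take, List.length_drop]; omega
  have hall : ∀ a ∈ (c.drop j1).take (j2 - j1), 0 < a := fun a ha =>
    hpos a (List.mem_of_mem_drop (List.mem_of_mem_take ha))
  have := List.sum_pos _ hall hnonempty
  omega

lemma beta_injOn (c : List ℕ) (hpos : ∀ a ∈ c, 0 < a) :
    Set.InjOn (fun j => (beta c j : ℝ)) (Finset.range (c.length + 1)) := by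
  intro j1 h1 j2 h2 h
  simp only [Finset.coe_range, Set.mem_Iio] at h1 h2
  have h' : beta c j1 = beta c j2 := Nat.cast_injective h
  by_contra hne
  rcases Nat.lt_or_ge j1 j2 with hlt | hge
  · exact absurd h' (Nat.ne_of_lt (beta_strictMonoOn c hpos hlt (by omega)))
  · exact absurd h'.symm (Nat.ne_of_lt (beta_strictMonoOn c hpos (by omega) (by omega)))

lemma beta_append_of_le (c : List ℕ) (a : ℕ) {j : ℕ} (h : j ≤ c.length) :
    beta (c ++ [a]) j = beta c j := by
  unfold beta; rw [List.take_append_of_le_length h]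

lemma beta_append_last (c : List ℕ) (a : ℕ) :
    beta (c ++ [a]) (c.length + 1) = c.sum + a := by
  unfold beta
  rw [List.take_of_length_le (by simp), List.sum_append]; simp

noncomputable def Dd (c : List ℕ) (j : ℕ) : ℝ :=
  ∏ l ∈ (Finset.range (c.length + 1)).erase j, ((beta c l : ℝ) - (beta c j : ℝ))

lemma Dd_ne_zero (c : List ℕ) (hpos : ∀ a ∈ c, 0 < a) {j : ℕ}
    (hj : j ∈ Finset.range (c.length + 1)) : Dd c j ≠ 0 := by
  apply Finset.prod_ne_zero_iff.mpr
  intro l hl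
  have hlj := Finset.mem_erase.mp hl
  have hlr := Finset.mem_range.mp hlj.2
  have hjr := Finset.mem_range.mp hj
  intro hzero
  have : (beta c l : ℝ) = beta c j := by linarith
  exact hlj.1 (beta_injOn c hpos (by simp; omega) (by simp; omega) this)

theorem lagrange_sum_inv_prod_eq_zero {F : Type*} [Field F] {ι : Type*} [DecidableEq ι]
    {s : Finset ι} {v : ι → F} (hvs : Set.InjOn v s) (hs : 1 < s.card) :
    ∑ j ∈ s, (∏ l ∈ s.erase j, (v l - v j))⁻¹ = 0 := by
  have hne : s.Nonempty := Finset.card_pos.mp (by omega)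
  have hsum := Lagrange.sum_basis hvs hne
  have hcoeff := congrArg (fun p : Polynomial F => p.coeff (s.card - 1)) hsum
  simp only [Polynomial.finset_sum_coeff] at hcoeff
  have h1 : (1 : Polynomial F).coeff (s.card - 1) = 0 := by
    rw [Polynomial.coeff_one, if_neg (by omega)]
  rw [h1] at hcoeff
  have hlead : ∀ j ∈ s, (Lagrange.basis s v j).coeff (s.card - 1)
      = ∏ l ∈ s.erase j, (v j - v l)⁻¹ := by
    intro j hj
    have hnd := Lagrange.natDegree_basis hvs hj
    rw [← hnd, Polynomial.coeff_natDegree]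
    unfold Lagrange.basis
    rw [Polynomial.leadingCoeff_prod]
    apply Finset.prod_congr rfl
    intro l hl
    unfold Lagrange.basisDivisor
    rw [Polynomial.leadingCoeff_mul, Polynomial.leadingCoeff_C,
      (Polynomial.monic_X_sub_C (v l)).leadingCoeff, mul_one]
  rw [Finset.sum_congr rfl hlead] at hcoeff
  have key : ∀ j ∈ s, (∏ l ∈ s.erase j, (v l - v j))⁻¹
      = (-1 : F) ^ (s.card - 1) * ∏ l ∈ s.erase j, (v j - v l)⁻¹ := by
    intro j hj
    rw [show ∏ l ∈ s.erase j, (v l - v j) = (-1 : F) ^ (s.card - 1) * ∏ l ∈ s.erase j, (v j - v l) by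
      rw [← Finset.card_erase_of_mem hj, ← Finset.prod_const, ← Finset.prod_mul_distrib]
      exact Finset.prod_congr rfl fun l _ => by ring]
    rw [mul_inv, ← Finset.prod_inv_distrib, ← inv_pow, inv_neg_one]
  rw [Finset.sum_congr rfl key, ← Finset.mul_sum, hcoeff, mul_zero]

theorem gAux_formula : ∀ (c : List ℕ), (∀ a ∈ c, 0 < a) → ∀ q u : ℝ,
    gAux c.reverse q u = ∑ j ∈ Finset.range (c.length + 1),
      (1 / Dd c j) * q ^ (beta c j) * u ^ (c.sum - beta c j) := by
  intro c
  induction c using List.reverseRecOn with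
  | nil => intro _ q u; simp [gAux, Dd, beta]
  | append_singleton c a ih =>
    intro hpos q u
    have hposc : ∀ b ∈ c, 0 < b := fun b hb => hpos b (by simp [hb])
    have ha : 0 < a := hpos a (by simp)
    set k := c.length with hk
    set n := c.sum with hn
    have hlen : (c ++ [a]).length = k + 1 := by simp [hk]
    have hsum' : (c ++ [a]).sum = n + a := by simp [hn]
    rw [List.reverse_append]
    simp only [List.reverse_singleton, List.singleton_append]
    show (∫ t in q..u, t ^ (a - 1) * gAux c.reverse q t) = _
    simp only [ih hposc]
    have hre : ∀ t : ℝ, t ^ (a - 1) * ∑ j ∈ Finset.range (k + 1),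
        (1 / Dd c j) * q ^ (beta c j) * t ^ (n - beta c j)
        = ∑ j ∈ Finset.range (k + 1),
          ((1 / Dd c j) * q ^ (beta c j)) * t ^ ((a - 1) + (n - beta c j)) := by
      intro t
      rw [Finset.mul_sum]
      exact Finset.sum_congr rfl fun j _ => by rw [pow_add]; ring
    simp only [hre]
    rw [intervalIntegral.integral_finset_sum (f := fun j t => 1 / Dd c j * q ^ beta c j * t ^ (a - 1 + (n - beta c j))) (fun j _ =>
      ((continuous_const.mul (continuous_pow _)).intervalIntegrable _ _))]
    simp only [intervalIntegral.integral_const_mul, integral_pow]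
    -- Now the algebra
    have hzero : ∑ j ∈ Finset.range (k + 2), 1 / Dd (c ++ [a]) j = 0 := by
      have := lagrange_sum_inv_prod_eq_zero
        (beta_injOn (c ++ [a]) hpos) (s := Finset.range ((c ++ [a]).length + 1))
        (by rw [hlen]; simp)
      rw [hlen] at this
      simpa [Dd, hlen, one_div] using this
    have hDd' : ∀ j ∈ Finset.range (k + 1),
        Dd (c ++ [a]) j = Dd c j * (((n : ℝ) + a) - beta c j) := by
      intro j hj
      have hjk := Finset.mem_range.mp hj
      unfold Dd
      rw [hlen]
      have hins : (Finset.range (k + 2)).erase j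
          = insert (k + 1) ((Finset.range (k + 1)).erase j) := by
        ext x
        simp only [Finset.mem_erase, Finset.mem_range, Finset.mem_insert]
        omega
      rw [hins, Finset.prod_insert (by simp)]
      rw [beta_append_last, beta_append_of_le c a (by omega)]
      rw [Finset.prod_congr rfl (fun l hl => by
        have hlk := Finset.mem_range.mp (Finset.mem_of_mem_erase hl)
        rw [beta_append_of_le c a (by omega)])]
      rw [hn, mul_comm]
      push_cast
      simp only [← hk]
    rw [hlen, hsum']
    conv_rhs => rw [Finset.sum_range_succ]
    have hbtop : beta (c ++ [a]) (k + 1) = n + a := beta_append_last c a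
    rw [hbtop, Nat.sub_self, pow_zero, mul_one]
    have hlast : 1 / Dd (c ++ [a]) (k + 1) = -∑ j ∈ Finset.range (k + 1), 1 / Dd (c ++ [a]) j := by
      rw [Finset.sum_range_succ] at hzero; linarith
    rw [hlast]
    have step : ∀ x ∈ Finset.range (k + 1),
        1 / Dd c x * q ^ beta c x *
          ((u ^ (a - 1 + (n - beta c x) + 1) - q ^ (a - 1 + (n - beta c x) + 1)) /
            (↑(a - 1 + (n - beta c x)) + 1)) =
        1 / Dd (c ++ [a]) x * q ^ beta (c ++ [a]) x * u ^ (n + a - beta (c ++ [a]) x)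
          - 1 / Dd (c ++ [a]) x * q ^ (n + a) := by
      intro x hx
      have hxk := Finset.mem_range.mp hx
      have hble := beta_le_sum c x
      have hb : beta (c ++ [a]) x = beta c x := beta_append_of_le c a (by omega)
      have hM : a - 1 + (n - beta c x) + 1 = n + a - beta c x := by omega
      have hcast : (↑(a - 1 + (n - beta c x)) + 1 : ℝ) = ↑n + ↑a - ↑(beta c x) := by
        rw [show ((↑(a - 1 + (n - beta c x)) + 1 : ℝ)) = ((a - 1 + (n - beta c x) + 1 : ℕ) : ℝ) by
          push_cast; ring, hM, Nat.cast_sub (by omega)]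
        push_cast; ring
      have hq : q ^ beta c x * q ^ (n + a - beta c x) = q ^ (n + a) := by
        rw [← pow_add]; congr 1; omega
      rw [hb, hDd' x hx, hM, hcast, ← hq]
      have hD := Dd_ne_zero c hposc (j := x) (Finset.mem_range.mpr (by omega))
      have hR : (↑n + ↑a - ↑(beta c x) : ℝ) ≠ 0 := by
        rw [← hcast]; positivity
      field_simp
    rw [Finset.sum_congr rfl step, Finset.sum_sub_distrib, ← Finset.sum_mul]
    ring

lemma coeff_invOneSubPow (k m : ℕ) :
    PowerSeries.coeff m (PowerSeries.invOneSubPow ℝ k).val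
      = (Nat.choose (k + m - 1) m : ℝ) := by
  cases k with
  | zero =>
    rw [PowerSeries.invOneSubPow_zero, Units.val_one, PowerSeries.coeff_one]
    cases m with
    | zero => simp
    | succ m => rw [if_neg (by omega), Nat.choose_eq_zero_of_lt (by omega), Nat.cast_zero]
  | succ d =>
    rw [PowerSeries.invOneSubPow_val_succ_eq_mk_add_choose, PowerSeries.coeff_mk]
    congr 1
    have h := Nat.choose_symm (show d ≤ d + m by omega)
    simp only [Nat.add_sub_cancel_left] at h
    rw [show d + 1 + m - 1 = d + m by omega, ← h]

theorem reduced_composition_polynomial_coeffs (c : List ℕ) (hpos : ∀ a ∈ c, 0 < a)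
    (f : Polynomial ℝ) (hdeg : f.natDegree = c.sum - c.length)
    (hf : ∀ q : ℝ, gcomp c q = (1 - q) ^ c.length * f.eval q) :
    ∀ i ≤ c.sum - c.length, f.coeff i =
      ∑ j ∈ (Finset.range (c.length + 1)).filter (fun j => beta c j ≤ i),
        (1 / ∏ l ∈ (Finset.range (c.length + 1)).erase j,
            ((beta c l : ℝ) - (beta c j : ℝ))) *
          (Nat.choose (c.length + (i - beta c j) - 1) (i - beta c j) : ℝ) := by
  intro i hi
  set k := c.length with hk
  have hpoly : (1 - Polynomial.X) ^ k * f
      = ∑ j ∈ Finset.range (k + 1), Polynomial.C (1 / Dd c j) * Polynomial.X ^ beta c j := by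
    apply Polynomial.funext
    intro q
    rw [Polynomial.eval_mul, Polynomial.eval_pow, Polynomial.eval_sub, Polynomial.eval_one,
      Polynomial.eval_X, ← hf q]
    show gAux c.reverse q 1 = _
    rw [gAux_formula c hpos q 1]
    rw [Polynomial.eval_finset_sum]
    exact Finset.sum_congr rfl fun j _ => by
      rw [Polynomial.eval_mul, Polynomial.eval_C, Polynomial.eval_pow, Polynomial.eval_X,
        one_pow, mul_one]
  have hP : ((∑ j ∈ Finset.range (k + 1), Polynomial.C (1 / Dd c j)
        * Polynomial.X ^ beta c j : Polynomial ℝ) : PowerSeries ℝ)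
      = ∑ j ∈ Finset.range (k + 1),
          PowerSeries.C (1 / Dd c j) * PowerSeries.X ^ beta c j := by
    rw [← Polynomial.coeToPowerSeries.ringHom_apply, map_sum]
    exact Finset.sum_congr rfl fun j _ => by
      rw [map_mul, map_pow]
      simp [Polynomial.coeToPowerSeries.ringHom_apply]
  have hps := congrArg (fun p : Polynomial ℝ => (p : PowerSeries ℝ)) hpoly
  simp only [Polynomial.coe_mul, Polynomial.coe_pow, Polynomial.coe_sub, Polynomial.coe_one,
    Polynomial.coe_X, hP] at hps
  have hf2 : (f : PowerSeries ℝ) = (PowerSeries.invOneSubPow ℝ k).val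
      * ∑ j ∈ Finset.range (k + 1),
          PowerSeries.C (1 / Dd c j) * PowerSeries.X ^ beta c j := by
    rw [← one_mul (f : PowerSeries ℝ), ← (PowerSeries.invOneSubPow ℝ k).val_inv, mul_assoc,
      PowerSeries.invOneSubPow_inv_eq_one_sub_pow, hps]
  have hco : f.coeff i = PowerSeries.coeff i (f : PowerSeries ℝ) :=
    (Polynomial.coeff_coe f i).symm
  rw [hco, hf2, Finset.mul_sum]
  rw [Finset.sum_congr rfl (fun j _ => show (PowerSeries.invOneSubPow ℝ k).val
      * (PowerSeries.C (1 / Dd c j) * PowerSeries.X ^ beta c j)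
      = PowerSeries.C (1 / Dd c j)
        * ((PowerSeries.invOneSubPow ℝ k).val * PowerSeries.X ^ beta c j) from by ring)]
  rw [map_sum]
  rw [Finset.sum_congr rfl (fun j _ => by
    rw [PowerSeries.coeff_C_mul, PowerSeries.coeff_mul_X_pow', coeff_invOneSubPow])]
  rw [Finset.sum_filter]
  apply Finset.sum_congr rfl
  intro j _
  rw [mul_ite, mul_zero]
  rfl
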